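/- Let k ≥ 2. The real vector space {(v,q) : v a vector field with components in 𝒫^k(ℝ³), q ∈ 𝒫^{k-1}(ℝ³), Δv = ∇q and div v = 0} (the local Trefftz space in dimension 3) has dimension 3k² + 6k + 3 = 3(k+1)². -/

import Mathlib

open MvPolynomial

/-- The formal Laplacian `Δp = ∑ⱼ ∂ⱼ∂ⱼp` of a polynomial in `d` variables. -/
noncomputable def lap {d : ℕ} (p : MvPolynomial (Fin d) ℝ) : MvPolynomial (Fin d) ℝ :=
  ∑ j, pderiv j (pderiv j p)

/-- The formal divergence `div v = ∑ᵢ ∂ᵢvᵢ` of a polynomial vector field. -/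
noncomputable def pdiv {d : ℕ} (v : Fin d → MvPolynomial (Fin d) ℝ) : MvPolynomial (Fin d) ℝ :=
  ∑ i, pderiv i (v i)

/-- The local Trefftz space: pairs `(v, q)` with `v` a vector field with components of total
degree at most `k`, `q` of total degree at most `k - 1`, satisfying `Δv = ∇q` and `div v = 0`. -/
noncomputable def trefftzSpace (d k : ℕ) :
    Submodule ℝ ((Fin d → MvPolynomial (Fin d) ℝ) × MvPolynomial (Fin d) ℝ) where
  carrier := {vq | (∀ i, (vq.1 i).totalDegree ≤ k) ∧ vq.2.totalDegree ≤ k - 1 ∧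
      (∀ i, lap (vq.1 i) = pderiv i vq.2) ∧ pdiv vq.1 = 0}
  add_mem' := by
    rintro ⟨v, q⟩ ⟨w, r⟩ ⟨hv, hq, hvq, hdv⟩ ⟨hw, hr, hwr, hdw⟩
    refine ⟨fun i => le_trans (totalDegree_add _ _) (max_le (hv i) (hw i)),
      le_trans (totalDegree_add _ _) (max_le hq hr), fun i => ?_, ?_⟩
    · show lap (v i + w i) = pderiv i (q + r)
      simp [lap, Finset.sum_add_distrib, ← hvq i, ← hwr i]
    · show pdiv (v + w) = 0
      rw [show pdiv (v + w) = pdiv v + pdiv w by simp [pdiv, Finset.sum_add_distrib],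
        hdv, hdw, add_zero]
  zero_mem' :=
    ⟨fun i => by simp, by simp, fun i => by simp [lap], by simp [pdiv]⟩
  smul_mem' := by
    rintro c ⟨v, q⟩ ⟨hv, hq, hvq, hdv⟩
    refine ⟨fun i => le_trans (totalDegree_smul_le _ _) (hv i),
      le_trans (totalDegree_smul_le _ _) hq, fun i => ?_, ?_⟩
    · show lap (c • v i) = pderiv i (c • q)
      simp [lap, Finset.smul_sum, ← hvq i]
    · show pdiv (c • v) = 0
      rw [show pdiv (c • v) = c • pdiv v by simp [pdiv, Finset.smul_sum], hdv, smul_zero]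

open Finsupp

variable {d : ℕ}

lemma pderiv_as_sum (i : Fin d) (p : MvPolynomial (Fin d) ℝ) :
    pderiv i p = ∑ s ∈ p.support.filter (fun s => s i ≠ 0),
      monomial (s - Finsupp.single i 1) (p.coeff s * s i) := by
  conv_lhs => rw [p.as_sum, map_sum]
  rw [Finset.sum_filter]
  refine Finset.sum_congr rfl fun s _ => ?_
  rw [pderiv_monomial]
  by_cases h : s i = 0 <;> simp [h]

lemma support_pderiv_subset (i : Fin d) (p : MvPolynomial (Fin d) ℝ) :
    (pderiv i p).support ⊆
      (p.support.filter (fun s => s i ≠ 0)).image (· - Finsupp.single i 1) := by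
  classical
  rw [pderiv_as_sum]
  refine MvPolynomial.support_sum.trans ?_
  intro t ht
  simp only [Finset.mem_biUnion] at ht
  obtain ⟨s, hs, hts⟩ := ht
  have := support_monomial_subset hts
  simp only [Finset.mem_singleton] at this
  subst this
  exact Finset.mem_image_of_mem _ hs

lemma finsupp_sum_eq (s : Fin d →₀ ℕ) : (s.sum fun _ e => e) = ∑ j, s j :=
  Finsupp.sum_fintype _ _ (fun _ => rfl)

lemma measure_pderiv_le (i : Fin d) (p : MvPolynomial (Fin d) ℝ) (g : Fin d → ℕ)
    (hgi : 1 ≤ g i) :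
    ((pderiv i p).support.sup fun s => ∑ j, g j * s j) ≤
      (p.support.sup fun s => ∑ j, g j * s j) - 1 := by
  apply Finset.sup_le
  intro t ht
  obtain ⟨s, hs, rfl⟩ := Finset.mem_image.mp (support_pderiv_subset i p ht)
  rw [Finset.mem_filter] at hs
  have h1 : (∑ j, g j * s j) ≤ p.support.sup fun s => ∑ j, g j * s j :=
    Finset.le_sup (f := fun s => ∑ j, g j * s j) hs.1
  have h2 : (∑ j, g j * ((s - Finsupp.single i 1 : Fin d →₀ ℕ) j)) + g i ≤ ∑ j, g j * s j := by
    have key : ∀ j, g j * ((s - Finsupp.single i 1 : Fin d →₀ ℕ) j) + (if j = i then g i else 0)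
        ≤ g j * s j := by
      intro j
      simp only [Finsupp.tsub_apply, Finsupp.single_apply]
      rcases eq_or_ne j i with rfl | h
      · simp only [if_pos rfl, if_true]
        rw [← Nat.mul_succ]
        have : s j ≠ 0 := hs.2
        have h4 : (s j - 1).succ = s j := by omega
        rw [h4]
      · simp [h, Finsupp.single_apply, Ne.symm h]
    calc (∑ j, g j * ((s - Finsupp.single i 1 : Fin d →₀ ℕ) j)) + g i
        = ∑ j, (g j * ((s - Finsupp.single i 1 : Fin d →₀ ℕ) j) + if j = i then g i else 0) := by
          rw [Finset.sum_add_distrib, Finset.sum_ite_eq' Finset.univ i fun _ => g i]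
          simp
      _ ≤ ∑ j, g j * s j := Finset.sum_le_sum fun j _ => key j
  omega

lemma totalDegree_eq_sup (p : MvPolynomial (Fin d) ℝ) :
    p.totalDegree = p.support.sup fun s => ∑ j, (1 : ℕ) * s j := by
  rw [totalDegree]
  congr 1
  ext s
  rw [finsupp_sum_eq]
  simp

lemma totalDegree_pderiv_le' (i : Fin d) (p : MvPolynomial (Fin d) ℝ) :
    (pderiv i p).totalDegree ≤ p.totalDegree - 1 := by
  rw [totalDegree_eq_sup, totalDegree_eq_sup]
  exact measure_pderiv_le i p (fun _ => 1) le_rfl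

/-- formal antiderivative in variable `i` -/
noncomputable def antid (i : Fin d) :
    MvPolynomial (Fin d) ℝ →ₗ[ℝ] MvPolynomial (Fin d) ℝ :=
  (basisMonomials (Fin d) ℝ).constr ℝ
    fun s => monomial (s + Finsupp.single i 1) (((s i : ℝ) + 1)⁻¹)

lemma antid_monomial (i : Fin d) (s : Fin d →₀ ℕ) (c : ℝ) :
    antid i (monomial s c) = monomial (s + Finsupp.single i 1) (c * ((s i : ℝ) + 1)⁻¹) := by
  have h : (monomial s c : MvPolynomial (Fin d) ℝ) = c • (basisMonomials (Fin d) ℝ s) := by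
    rw [coe_basisMonomials]
    simp [smul_monomial]
  rw [h, map_smul, antid, Module.Basis.constr_basis, smul_monomial, smul_eq_mul]

lemma pderiv_antid (i : Fin d) (p : MvPolynomial (Fin d) ℝ) :
    pderiv i (antid i p) = p := by
  have : ((pderiv i : Derivation ℝ _ _).toLinearMap.comp (antid i)) = LinearMap.id := by
    apply (basisMonomials (Fin d) ℝ).ext
    intro s
    simp only [LinearMap.comp_apply, coe_basisMonomials, LinearMap.id_apply]
    show pderiv i (antid i (monomial s 1)) = monomial s 1
    rw [antid_monomial, pderiv_monomial]
    have h1 : (s + Finsupp.single i 1 : Fin d →₀ ℕ) - Finsupp.single i 1 = s :=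
      add_tsub_cancel_right ..
    have h2 : ((s + Finsupp.single i 1 : Fin d →₀ ℕ) i : ℝ) = (s i : ℝ) + 1 := by
      simp
    rw [h1, h2]
    congr 1
    have : ((s i : ℝ) + 1) ≠ 0 := by positivity
    field_simp
  calc pderiv i (antid i p)
      = ((pderiv i : Derivation ℝ _ _).toLinearMap.comp (antid i)) p := rfl
    _ = p := by rw [this]; rfl

lemma antid_as_sum (i : Fin d) (p : MvPolynomial (Fin d) ℝ) :
    antid i p = ∑ s ∈ p.support,
      monomial (s + Finsupp.single i 1) (p.coeff s * ((s i : ℝ) + 1)⁻¹) := by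
  conv_lhs => rw [p.as_sum, map_sum]
  exact Finset.sum_congr rfl fun s _ => antid_monomial i s _

lemma support_antid_subset (i : Fin d) (p : MvPolynomial (Fin d) ℝ) :
    (antid i p).support ⊆ p.support.image (· + Finsupp.single i 1) := by
  classical
  rw [antid_as_sum]
  refine MvPolynomial.support_sum.trans ?_
  intro t ht
  simp only [Finset.mem_biUnion] at ht
  obtain ⟨s, hs, hts⟩ := ht
  have := support_monomial_subset hts
  simp only [Finset.mem_singleton] at this
  subst this
  exact Finset.mem_image_of_mem _ hs

lemma measure_antid_le (i : Fin d) (p : MvPolynomial (Fin d) ℝ) (g : Fin d → ℕ) :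
    ((antid i p).support.sup fun s => ∑ j, g j * s j) ≤
      (p.support.sup fun s => ∑ j, g j * s j) + g i := by
  apply Finset.sup_le
  intro t ht
  obtain ⟨s, hs, rfl⟩ := Finset.mem_image.mp (support_antid_subset i p ht)
  have h1 : (∑ j, g j * s j) ≤ p.support.sup fun s => ∑ j, g j * s j :=
    Finset.le_sup (f := fun s => ∑ j, g j * s j) hs
  have h2 : (∑ j, g j * ((s + Finsupp.single i 1 : Fin d →₀ ℕ) j)) =
      (∑ j, g j * s j) + g i := by
    have key : ∀ j, g j * ((s + Finsupp.single i 1 : Fin d →₀ ℕ) j) =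
        g j * s j + (if j = i then g i else 0) := by
      intro j
      simp only [Finsupp.add_apply, Finsupp.single_apply]
      rcases eq_or_ne j i with rfl | h
      · simp [Nat.mul_add]
      · simp [h, Ne.symm h]
    rw [Finset.sum_congr rfl fun j _ => key j, Finset.sum_add_distrib,
      Finset.sum_ite_eq' Finset.univ i fun _ => g i]
    simp
  omega

/-- the weight vector for the induction measure: total degree in variables 1, 2 -/
def mw : Fin 3 → ℕ := fun j => if j = 0 then 0 else 1

noncomputable def m2 (p : MvPolynomial (Fin 3) ℝ) : ℕ :=
  p.support.sup fun s => ∑ j, mw j * s j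

lemma m2_add_le (p q : MvPolynomial (Fin 3) ℝ) : m2 (p + q) ≤ max (m2 p) (m2 q) := by
  classical
  refine Finset.sup_le fun t ht => ?_
  have := MvPolynomial.support_add (p := p) (q := q) ht
  rw [Finset.mem_union] at this
  rcases this with h | h
  · exact le_max_of_le_left (Finset.le_sup (f := fun s => ∑ j, mw j * s j) h)
  · exact le_max_of_le_right (Finset.le_sup (f := fun s => ∑ j, mw j * s j) h)

lemma m2_pderiv_le (i : Fin 3) (hi : i ≠ 0) (p : MvPolynomial (Fin 3) ℝ) :
    m2 (pderiv i p) ≤ m2 p - 1 :=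
  measure_pderiv_le i p mw (by simp [mw, hi])

lemma m2_antid_le (p : MvPolynomial (Fin 3) ℝ) : m2 (antid 0 p) ≤ m2 p := by
  have h := measure_antid_le 0 p mw
  have h0 : mw 0 = 0 := rfl
  rw [h0, add_zero] at h
  exact h

lemma pderiv_eq_zero_of_m2_eq_zero (i : Fin 3) (hi : i ≠ 0) (p : MvPolynomial (Fin 3) ℝ)
    (h : m2 p = 0) : pderiv i p = 0 := by
  apply pderiv_eq_zero_of_notMem_vars
  intro hv
  obtain ⟨s, hs, hsi⟩ := mem_vars i |>.mp hv
  have hsi' : s i ≠ 0 := Finsupp.mem_support_iff.mp hsi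
  have h1 : (∑ j, mw j * s j) ≤ m2 p := Finset.le_sup (f := fun s => ∑ j, mw j * s j) hs
  have h2 : s i ≤ ∑ j, mw j * s j := by
    calc s i = mw i * s i := by simp [mw, hi]
      _ ≤ ∑ j, mw j * s j := Finset.single_le_sum (f := fun j => mw j * s j)
          (fun _ _ => Nat.zero_le _) (Finset.mem_univ i)
  omega

lemma totalDegree_antid_le (i : Fin 3) (p : MvPolynomial (Fin 3) ℝ) :
    (antid i p).totalDegree ≤ p.totalDegree + 1 := by
  rw [totalDegree_eq_sup, totalDegree_eq_sup]
  have := measure_antid_le i p (fun _ => 1)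
  simpa using this

lemma lap_surj_aux : ∀ n : ℕ, ∀ p : MvPolynomial (Fin 3) ℝ, m2 p ≤ n →
    ∃ u, lap u = p ∧ u.totalDegree ≤ p.totalDegree + 2 := by
  intro n
  induction n using Nat.strong_induction_on with
  | _ n IH =>
    intro p hp
    set w := antid 0 (antid 0 p) with hw
    have hw0 : pderiv 0 (pderiv 0 w) = p := by
      rw [hw, pderiv_antid, pderiv_antid]
    set q := pderiv 1 (pderiv 1 w) + pderiv 2 (pderiv 2 w) with hq
    have hlapw : lap w = p + q := by
      rw [lap, Fin.sum_univ_three, hw0, hq]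
      ring
    have hm2w : m2 w ≤ m2 p := (m2_antid_le _).trans (m2_antid_le p)
    have hdegw : w.totalDegree ≤ p.totalDegree + 2 := by
      have h1 := totalDegree_antid_le 0 p
      have h2 := totalDegree_antid_le 0 (antid 0 p)
      rw [← hw] at h2
      omega
    by_cases hq0 : q = 0
    · exact ⟨w, by rw [hlapw, hq0, add_zero], hdegw⟩
    · have hn : 1 ≤ n := by
        rcases Nat.eq_zero_or_pos n with rfl | h
        · exfalso
          apply hq0
          have hm2w0 : m2 w = 0 := by omega
          rw [hq, pderiv_eq_zero_of_m2_eq_zero 1 (by decide) w hm2w0,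
            pderiv_eq_zero_of_m2_eq_zero 2 (by decide) w hm2w0]
          simp
        · exact h
      have hm2q : m2 q ≤ n - 2 := by
        have h1 : m2 (pderiv 1 (pderiv 1 w)) ≤ m2 w - 2 := by
          have a1 := m2_pderiv_le 1 (by decide) (pderiv 1 w)
          have a2 := m2_pderiv_le 1 (by decide) w
          omega
        have h2 : m2 (pderiv 2 (pderiv 2 w)) ≤ m2 w - 2 := by
          have a1 := m2_pderiv_le 2 (by decide) (pderiv 2 w)
          have a2 := m2_pderiv_le 2 (by decide) w
          omega
        have := m2_add_le (pderiv 1 (pderiv 1 w)) (pderiv 2 (pderiv 2 w))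
        rw [← hq] at this
        omega
      have hdegq : q.totalDegree ≤ p.totalDegree := by
        have h1 : (pderiv 1 (pderiv 1 w)).totalDegree ≤ w.totalDegree - 2 := by
          have a1 := totalDegree_pderiv_le' 1 (pderiv 1 w)
          have a2 := totalDegree_pderiv_le' 1 w
          omega
        have h2 : (pderiv 2 (pderiv 2 w)).totalDegree ≤ w.totalDegree - 2 := by
          have a1 := totalDegree_pderiv_le' 2 (pderiv 2 w)
          have a2 := totalDegree_pderiv_le' 2 w
          omega
        have h3 := totalDegree_add (pderiv 1 (pderiv 1 w)) (pderiv 2 (pderiv 2 w))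
        rw [← hq] at h3
        omega
      obtain ⟨v, hv1, hv2⟩ := IH (n - 2) (by omega) q hm2q
      refine ⟨w - v, ?_, ?_⟩
      · have : lap (w - v) = lap w - lap v := by
          rw [lap, lap, lap, ← Finset.sum_sub_distrib]
          exact Finset.sum_congr rfl fun j _ => by rw [map_sub, map_sub]
        rw [this, hlapw, hv1]
        ring
      · calc (w - v).totalDegree = (w + (-v)).totalDegree := by rw [sub_eq_add_neg]
          _ ≤ max w.totalDegree (-v).totalDegree := totalDegree_add _ _
          _ ≤ p.totalDegree + 2 := by
              rw [totalDegree_neg]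
              omega

lemma lap_surj (p : MvPolynomial (Fin 3) ℝ) :
    ∃ u, lap u = p ∧ u.totalDegree ≤ p.totalDegree + 2 :=
  lap_surj_aux (m2 p) p le_rfl

lemma pderiv_pderiv_comm (i j : Fin d) (p : MvPolynomial (Fin d) ℝ) :
    pderiv i (pderiv j p) = pderiv j (pderiv i p) := by
  rcases eq_or_ne i j with rfl | hij
  · rfl
  · conv_lhs => rw [p.as_sum, map_sum, map_sum]
    conv_rhs => rw [p.as_sum, map_sum, map_sum]
    refine Finset.sum_congr rfl fun s _ => ?_
    rw [pderiv_monomial, pderiv_monomial, pderiv_monomial, pderiv_monomial]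
    have e1 : ((s - Finsupp.single j 1 : Fin d →₀ ℕ)) i = s i := by
      simp [Finsupp.tsub_apply, Finsupp.single_apply, Ne.symm hij]
    have e2 : ((s - Finsupp.single i 1 : Fin d →₀ ℕ)) j = s j := by
      simp [Finsupp.tsub_apply, Finsupp.single_apply, hij]
    rw [e1, e2]
    have e3 : (s - Finsupp.single j 1 - Finsupp.single i 1 : Fin d →₀ ℕ)
        = s - Finsupp.single i 1 - Finsupp.single j 1 := by
      ext a
      simp only [Finsupp.tsub_apply]
      omega
    rw [e3]
    congr 1
    ring

lemma lap_add (p q : MvPolynomial (Fin d) ℝ) : lap (p + q) = lap p + lap q := by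
  rw [lap, lap, lap, ← Finset.sum_add_distrib]
  exact Finset.sum_congr rfl fun j _ => by rw [map_add, map_add]

lemma lap_pderiv (i : Fin d) (p : MvPolynomial (Fin d) ℝ) :
    lap (pderiv i p) = pderiv i (lap p) := by
  rw [lap, lap, map_sum]
  refine Finset.sum_congr rfl fun j _ => ?_
  rw [pderiv_pderiv_comm j i p, pderiv_pderiv_comm j i (pderiv j p)]

lemma totalDegree_pdiv_le {k : ℕ} (v : Fin d → MvPolynomial (Fin d) ℝ)
    (hv : ∀ i, (v i).totalDegree ≤ k) : (pdiv v).totalDegree ≤ k - 1 := by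
  refine totalDegree_finsetSum_le fun i _ => ?_
  have h1 := totalDegree_pderiv_le' i (v i)
  have h2 := hv i
  omega

lemma stokes_surj {k : ℕ} (hk : 2 ≤ k) (f : Fin 3 → MvPolynomial (Fin 3) ℝ)
    (g : MvPolynomial (Fin 3) ℝ) (hf : ∀ i, (f i).totalDegree ≤ k - 2)
    (hg : g.totalDegree ≤ k - 1) :
    ∃ (v : Fin 3 → MvPolynomial (Fin 3) ℝ) (q : MvPolynomial (Fin 3) ℝ),
      (∀ i, (v i).totalDegree ≤ k) ∧ q.totalDegree ≤ k - 1 ∧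
      (∀ i, lap (v i) - pderiv i q = f i) ∧ pdiv v = g := by
  choose v₀ hv₀ hdv₀ using fun i => lap_surj (f i)
  have hdv₀' : ∀ i, (v₀ i).totalDegree ≤ k := fun i => by
    have := hf i; have := hdv₀ i; omega
  set h := g - pdiv v₀ with hh
  have hdegdiv : (pdiv v₀).totalDegree ≤ k - 1 := totalDegree_pdiv_le v₀ hdv₀'
  have hdegh : h.totalDegree ≤ k - 1 := by
    rw [hh, sub_eq_add_neg]
    refine (totalDegree_add _ _).trans ?_
    rw [totalDegree_neg]
    omega
  obtain ⟨φ, hφ, hdφ⟩ := lap_surj h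
  refine ⟨fun i => v₀ i + pderiv i φ, h, fun i => ?_, hdegh, fun i => ?_, ?_⟩
  · refine (totalDegree_add _ _).trans ?_
    have h1 := totalDegree_pderiv_le' i φ
    have h2 := hdv₀' i
    simp only [max_le_iff]
    omega
  · rw [lap_add, lap_pderiv, hφ, hv₀]
    ring
  · rw [pdiv]
    have : ∀ i, pderiv i (v₀ i + pderiv i φ) = pderiv i (v₀ i) + pderiv i (pderiv i φ) :=
      fun i => map_add _ _ _
    rw [Finset.sum_congr rfl fun i _ => this i, Finset.sum_add_distrib]
    rw [show (∑ i, pderiv i (v₀ i)) = pdiv v₀ from rfl,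
      show (∑ i, pderiv i (pderiv i φ)) = lap φ from rfl, hφ, hh]
    ring

lemma lap_smul (c : ℝ) (p : MvPolynomial (Fin d) ℝ) : lap (c • p) = c • lap p := by
  rw [lap, lap, Finset.smul_sum]
  exact Finset.sum_congr rfl fun j _ => by rw [(pderiv j).map_smul, (pderiv j).map_smul]

lemma pdiv_add (v w : Fin d → MvPolynomial (Fin d) ℝ) :
    pdiv (fun i => v i + w i) = pdiv v + pdiv w := by
  rw [pdiv, pdiv, pdiv, ← Finset.sum_add_distrib]
  exact Finset.sum_congr rfl fun j _ => map_add _ _ _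

lemma pdiv_smul (c : ℝ) (v : Fin d → MvPolynomial (Fin d) ℝ) :
    pdiv (fun i => c • v i) = c • pdiv v := by
  rw [pdiv, pdiv, Finset.smul_sum]
  exact Finset.sum_congr rfl fun j _ => (pderiv j).map_smul _ _

/-- the Stokes operator as a linear map on the ambient space -/
noncomputable def bigL :
    ((Fin 3 → MvPolynomial (Fin 3) ℝ) × MvPolynomial (Fin 3) ℝ) →ₗ[ℝ]
    ((Fin 3 → MvPolynomial (Fin 3) ℝ) × MvPolynomial (Fin 3) ℝ) where
  toFun vq := (fun i => lap (vq.1 i) - pderiv i vq.2, pdiv vq.1)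
  map_add' x y := by
    refine Prod.ext ?_ ?_
    · funext i
      show lap (x.1 i + y.1 i) - pderiv i (x.2 + y.2) = _
      rw [lap_add, map_add]
      show _ = (lap (x.1 i) - pderiv i x.2) + (lap (y.1 i) - pderiv i y.2)
      ring
    · show pdiv (fun i => x.1 i + y.1 i) = _
      rw [pdiv_add]
      rfl
  map_smul' c x := by
    refine Prod.ext ?_ ?_
    · funext i
      show lap (c • x.1 i) - pderiv i (c • x.2) = _
      rw [lap_smul, (pderiv i).map_smul]
      show _ = c • (lap (x.1 i) - pderiv i x.2)
      rw [smul_sub]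
    · show pdiv (fun i => c • x.1 i) = _
      rw [pdiv_smul]
      rfl

/-- equivalence between a pi-submodule and the pi-type of submodules -/
def piSubmoduleEquiv {R : Type*} [Semiring R] {ι : Type*} {φ : ι → Type*}
    [∀ i, AddCommMonoid (φ i)] [∀ i, Module R (φ i)] (p : ∀ i, Submodule R (φ i)) :
    (Submodule.pi Set.univ p) ≃ₗ[R] Π i, p i where
  toFun x := fun i => ⟨x.1 i, x.2 i (Set.mem_univ i)⟩
  invFun x := ⟨fun i => (x i).1, fun i _ => (x i).2⟩
  map_add' _ _ := rfl
  map_smul' _ _ := rfl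
  left_inv _ := rfl
  right_inv _ := rfl

/-- equivalence between a product submodule and the product of submodules -/
def prodSubmoduleEquiv {R M N : Type*} [Semiring R] [AddCommMonoid M] [AddCommMonoid N]
    [Module R M] [Module R N] (p : Submodule R M) (q : Submodule R N) :
    (p.prod q) ≃ₗ[R] p × q where
  toFun x := (⟨x.1.1, x.2.1⟩, ⟨x.1.2, x.2.2⟩)
  invFun x := ⟨(x.1.1, x.2.1), ⟨x.1.2, x.2.2⟩⟩
  map_add' _ _ := rfl
  map_smul' _ _ := rfl
  left_inv _ := rfl
  right_inv _ := rfl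

/-- the index set of monomials of total degree at most `m` -/
def Sset (m : ℕ) : Set (Fin 3 →₀ ℕ) := {s | (s.sum fun _ e => e) ≤ m}

/-- the index set of monomials of total degree exactly `j` -/
def Eset (j : ℕ) : Set (Fin 3 →₀ ℕ) := {s | (s.sum fun _ e => e) = j}

/-- monomials of degree exactly `j` correspond to multisets of size `j` -/
noncomputable def esetEquivSym (j : ℕ) : Eset j ≃ Sym (Fin 3) j where
  toFun s := ⟨Finsupp.toMultiset s.1, by rw [Finsupp.card_toMultiset]; exact s.2⟩
  invFun m := ⟨Multiset.toFinsupp m.1, by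
    have h : Finsupp.toMultiset (Multiset.toFinsupp m.1) = m.1 := by simp
    have h2 := Finsupp.card_toMultiset (Multiset.toFinsupp m.1)
    rw [h] at h2
    show ((Multiset.toFinsupp m.1).sum fun _ e => e) = j
    exact (h2.symm.trans m.2 : _)⟩
  left_inv s := by
    apply Subtype.ext
    simp
  right_inv m := by
    apply Subtype.ext
    simp

lemma card_eset (j : ℕ) : Nat.card (Eset j) = (j + 2).choose j := by
  rw [Nat.card_congr (esetEquivSym j), Nat.card_eq_fintype_card, Sym.card_sym_eq_choose]
  rw [Fintype.card_fin]
  congr 1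
  omega

instance finite_eset (j : ℕ) : Finite (Eset j) := Finite.of_equiv _ (esetEquivSym j).symm

lemma sset_zero : Sset 0 = Eset 0 := by
  ext s
  simp only [Sset, Eset, Set.mem_setOf_eq]
  omega

lemma sset_succ (m : ℕ) : Sset (m + 1) = Sset m ∪ Eset (m + 1) := by
  ext s
  simp only [Sset, Eset, Set.mem_setOf_eq, Set.mem_union]
  omega

lemma sset_finite : ∀ m, (Sset m).Finite
  | 0 => sset_zero ▸ (Eset 0).toFinite
  | (m+1) => by rw [sset_succ]; exact (sset_finite m).union (Eset (m+1)).toFinite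

lemma card_sset_succ (m : ℕ) :
    Nat.card (Sset (m + 1)) = Nat.card (Sset m) + Nat.card (Eset (m + 1)) := by
  rw [Nat.card_coe_set_eq, Nat.card_coe_set_eq, Nat.card_coe_set_eq, sset_succ,
    Set.ncard_union_eq ?_ (sset_finite m) (Eset (m+1)).toFinite]
  rw [Set.disjoint_left]
  intro s hs hs'
  simp only [Sset, Eset, Set.mem_setOf_eq] at hs hs'
  omega

lemma restrictTotalDegree_eq (m : ℕ) :
    restrictTotalDegree (Fin 3) ℝ m = restrictSupport ℝ (Sset m) := rfl

lemma finrank_restrictTotalDegree (m : ℕ) :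
    Module.finrank ℝ (restrictTotalDegree (Fin 3) ℝ m) = Nat.card (Sset m) := by
  haveI : Fintype (Sset m) := (sset_finite m).fintype
  rw [restrictTotalDegree_eq, Module.finrank_eq_card_basis (basisRestrictSupport ℝ (Sset m)),
    Nat.card_eq_fintype_card]

/-- the domain of the restricted Stokes operator -/
noncomputable def Dsub (k : ℕ) :
    Submodule ℝ ((Fin 3 → MvPolynomial (Fin 3) ℝ) × MvPolynomial (Fin 3) ℝ) :=
  (Submodule.pi Set.univ fun _ : Fin 3 => restrictTotalDegree (Fin 3) ℝ k).prod
    (restrictTotalDegree (Fin 3) ℝ (k - 1))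

/-- the codomain of the restricted Stokes operator -/
noncomputable def Csub (k : ℕ) :
    Submodule ℝ ((Fin 3 → MvPolynomial (Fin 3) ℝ) × MvPolynomial (Fin 3) ℝ) :=
  (Submodule.pi Set.univ fun _ : Fin 3 => restrictTotalDegree (Fin 3) ℝ (k - 2)).prod
    (restrictTotalDegree (Fin 3) ℝ (k - 1))

lemma mem_Dsub {k : ℕ} {x : (Fin 3 → MvPolynomial (Fin 3) ℝ) × MvPolynomial (Fin 3) ℝ} :
    x ∈ Dsub k ↔ (∀ i, (x.1 i).totalDegree ≤ k) ∧ x.2.totalDegree ≤ k - 1 := by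
  simp [Dsub, Submodule.mem_prod, Submodule.mem_pi, mem_restrictTotalDegree]

lemma mem_Csub {k : ℕ} {x : (Fin 3 → MvPolynomial (Fin 3) ℝ) × MvPolynomial (Fin 3) ℝ} :
    x ∈ Csub k ↔ (∀ i, (x.1 i).totalDegree ≤ k - 2) ∧ x.2.totalDegree ≤ k - 1 := by
  simp [Csub, Submodule.mem_prod, Submodule.mem_pi, mem_restrictTotalDegree]

lemma trefftz_eq (k : ℕ) : trefftzSpace 3 k = Dsub k ⊓ LinearMap.ker bigL := by
  ext x
  have hmem : x ∈ trefftzSpace 3 k ↔ ((∀ i, (x.1 i).totalDegree ≤ k) ∧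
      x.2.totalDegree ≤ k - 1 ∧ (∀ i, lap (x.1 i) = pderiv i x.2) ∧ pdiv x.1 = 0) := Iff.rfl
  rw [hmem, Submodule.mem_inf, LinearMap.mem_ker, mem_Dsub]
  constructor
  · rintro ⟨h1, h2, h3, h4⟩
    refine ⟨⟨h1, h2⟩, ?_⟩
    have : bigL x = (fun i => lap (x.1 i) - pderiv i x.2, pdiv x.1) := rfl
    rw [this]
    refine Prod.ext ?_ h4
    funext i
    show lap (x.1 i) - pderiv i x.2 = 0
    rw [h3 i, sub_self]
  · rintro ⟨⟨h1, h2⟩, hker⟩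
    have hfst : (fun i => lap (x.1 i) - pderiv i x.2) = (0 : Fin 3 → MvPolynomial (Fin 3) ℝ) :=
      congrArg Prod.fst hker
    have hsnd : pdiv x.1 = 0 := congrArg Prod.snd hker
    refine ⟨h1, h2, fun i => ?_, hsnd⟩
    have := congrFun hfst i
    simpa [sub_eq_zero] using this

lemma totalDegree_lap_le (p : MvPolynomial (Fin d) ℝ) :
    (lap p).totalDegree ≤ p.totalDegree - 2 := by
  refine totalDegree_finsetSum_le fun j _ => ?_
  have h1 := totalDegree_pderiv_le' j (pderiv j p)
  have h2 := totalDegree_pderiv_le' j p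
  omega

lemma bigL_mem_Csub {k : ℕ} (x : (Fin 3 → MvPolynomial (Fin 3) ℝ) × MvPolynomial (Fin 3) ℝ)
    (hx : x ∈ Dsub k) : bigL x ∈ Csub k := by
  rw [mem_Dsub] at hx
  rw [mem_Csub]
  constructor
  · intro i
    show (lap (x.1 i) - pderiv i x.2).totalDegree ≤ k - 2
    rw [sub_eq_add_neg]
    refine (totalDegree_add _ _).trans ?_
    rw [totalDegree_neg]
    have h1 := totalDegree_lap_le (x.1 i)
    have h2 := totalDegree_pderiv_le' i x.2
    have h3 := hx.1 i
    have h4 := hx.2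
    simp only [max_le_iff]
    omega
  · show (pdiv x.1).totalDegree ≤ k - 1
    exact totalDegree_pdiv_le x.1 hx.1

/-- the restricted Stokes operator -/
noncomputable def Lres (k : ℕ) : Dsub k →ₗ[ℝ] Csub k :=
  (bigL.domRestrict (Dsub k)).codRestrict (Csub k) fun x => bigL_mem_Csub x.1 x.2

lemma Lres_surjective {k : ℕ} (hk : 2 ≤ k) : Function.Surjective (Lres k) := by
  rintro ⟨⟨f, g⟩, hy⟩
  rw [mem_Csub] at hy
  obtain ⟨v, q, hv, hq, hvq, hdv⟩ := stokes_surj hk f g hy.1 hy.2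
  refine ⟨⟨(v, q), mem_Dsub.mpr ⟨hv, hq⟩⟩, ?_⟩
  apply Subtype.ext
  show bigL (v, q) = (f, g)
  refine Prod.ext ?_ hdv
  funext i
  exact hvq i

noncomputable def dsubEquiv (k : ℕ) : Dsub k ≃ₗ[ℝ]
    ((Fin 3 → restrictTotalDegree (Fin 3) ℝ k) × restrictTotalDegree (Fin 3) ℝ (k - 1)) :=
  (prodSubmoduleEquiv _ _).trans
    (LinearEquiv.prodCongr (piSubmoduleEquiv fun _ : Fin 3 => restrictTotalDegree (Fin 3) ℝ k)
      (LinearEquiv.refl ℝ _))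

noncomputable def csubEquiv (k : ℕ) : Csub k ≃ₗ[ℝ]
    ((Fin 3 → restrictTotalDegree (Fin 3) ℝ (k - 2)) × restrictTotalDegree (Fin 3) ℝ (k - 1)) :=
  (prodSubmoduleEquiv _ _).trans
    (LinearEquiv.prodCongr (piSubmoduleEquiv fun _ : Fin 3 => restrictTotalDegree (Fin 3) ℝ (k - 2))
      (LinearEquiv.refl ℝ _))

instance (k : ℕ) : FiniteDimensional ℝ (Dsub k) := Module.Finite.equiv (dsubEquiv k).symm
instance (k : ℕ) : FiniteDimensional ℝ (Csub k) := Module.Finite.equiv (csubEquiv k).symm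

set_option synthInstance.maxHeartbeats 1000000 in
lemma finrank_Dsub (k : ℕ) : Module.finrank ℝ (Dsub k) =
    3 * Nat.card (Sset k) + Nat.card (Sset (k - 1)) := by
  rw [LinearEquiv.finrank_eq (dsubEquiv k), Module.finrank_prod, Module.finrank_pi_fintype,
    Finset.sum_const, Finset.card_univ, Fintype.card_fin, smul_eq_mul,
    finrank_restrictTotalDegree, finrank_restrictTotalDegree]

set_option synthInstance.maxHeartbeats 1000000 in
lemma finrank_Csub (k : ℕ) : Module.finrank ℝ (Csub k) =
    3 * Nat.card (Sset (k - 2)) + Nat.card (Sset (k - 1)) := by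
  rw [LinearEquiv.finrank_eq (csubEquiv k), Module.finrank_prod, Module.finrank_pi_fintype,
    Finset.sum_const, Finset.card_univ, Fintype.card_fin, smul_eq_mul,
    finrank_restrictTotalDegree, finrank_restrictTotalDegree]

lemma choose_eq_choose_two (m : ℕ) : (m + 3).choose (m + 1) = (m + 3).choose 2 := by
  rw [← Nat.choose_symm (by omega : m + 1 ≤ m + 3)]
  congr 1
  omega

lemma two_mul_choose (n : ℕ) : 2 * ((n + 2).choose 2) = (n + 2) * (n + 1) := by
  rw [Nat.choose_two_right]
  have h : n + 2 - 1 = n + 1 := rfl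
  rw [h]
  have hd : 2 ∣ (n + 2) * (n + 1) := by
    have := Nat.even_mul_succ_self (n + 1)
    rw [show (n + 1) * (n + 1 + 1) = (n + 2) * (n + 1) by ring] at this
    exact this.two_dvd
  exact Nat.mul_div_cancel' hd

/-- For `k ≥ 2`, the local Trefftz space in dimension 3 has dimension
`3k² + 6k + 3 = 3(k + 1)²`. -/
theorem finrank_trefftzSpace_dim3 (k : ℕ) (hk : 2 ≤ k) :
    Module.finrank ℝ (trefftzSpace 3 k) = 3 * k ^ 2 + 6 * k + 3 := by
  obtain ⟨m, rfl⟩ : ∃ m, k = m + 2 := ⟨k - 2, by omega⟩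
  set k := m + 2
  -- rank-nullity for the restricted Stokes operator
  have hrn := LinearMap.finrank_range_add_finrank_ker (Lres k)
  have hrange : LinearMap.range (Lres k) = ⊤ := LinearMap.range_eq_top.mpr (Lres_surjective hk)
  rw [hrange, finrank_top] at hrn
  -- the kernel of the restricted operator is the Trefftz space
  have hker : Module.finrank ℝ (LinearMap.ker (Lres k)) =
      Module.finrank ℝ (trefftzSpace 3 k) := by
    rw [trefftz_eq]
    have h1 : LinearMap.ker (Lres k) = (LinearMap.ker bigL).comap (Dsub k).subtype := by
      rw [Lres]
      exact (LinearMap.ker_codRestrict _ _ _).trans (LinearMap.ker_domRestrict _ _)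
    have h2 : (LinearMap.ker bigL).comap (Dsub k).subtype =
        (Dsub k ⊓ LinearMap.ker bigL).comap (Dsub k).subtype := by
      rw [Submodule.comap_inf, Submodule.comap_subtype_self, top_inf_eq]
    rw [h1, h2]
    exact LinearEquiv.finrank_eq (Submodule.comapSubtypeEquivOfLe inf_le_left)
  rw [hker] at hrn
  -- dimension counts
  rw [finrank_Dsub, finrank_Csub] at hrn
  have hS2 : Nat.card (Sset k) = Nat.card (Sset (k - 1)) + Nat.card (Eset k) := by
    have := card_sset_succ (m + 1)
    exact this
  have hS1 : Nat.card (Sset (k - 1)) = Nat.card (Sset (k - 2)) + Nat.card (Eset (k - 1)) := by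
    have := card_sset_succ m
    exact this
  have hc2 : Nat.card (Eset k) = (m + 4).choose (m + 2) := card_eset _
  have hc1 : Nat.card (Eset (k - 1)) = (m + 3).choose (m + 1) := card_eset _
  have key : Module.finrank ℝ (trefftzSpace 3 k) =
      3 * ((m + 3).choose (m + 1) + (m + 4).choose (m + 2)) := by omega
  rw [key]
  -- final arithmetic
  have e1 : 2 * ((m + 3).choose (m + 1)) = (m + 3) * (m + 2) := by
    rw [choose_eq_choose_two, show m + 3 = (m + 1) + 2 by ring, two_mul_choose]
  have e2 : 2 * ((m + 4).choose (m + 2)) = (m + 4) * (m + 3) := by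
    have : (m + 4).choose (m + 2) = (m + 4).choose 2 := by
      rw [← Nat.choose_symm (by omega : m + 2 ≤ m + 4)]
      congr 1
      omega
    rw [this, show m + 4 = (m + 2) + 2 by ring, two_mul_choose]
  apply Nat.eq_of_mul_eq_mul_left (show 0 < 2 by norm_num)
  calc 2 * (3 * ((m + 3).choose (m + 1) + (m + 4).choose (m + 2)))
      = 3 * (2 * ((m + 3).choose (m + 1))) + 3 * (2 * ((m + 4).choose (m + 2))) := by ring
    _ = 3 * ((m + 3) * (m + 2)) + 3 * ((m + 4) * (m + 3)) := by rw [e1, e2]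
    _ = 2 * (3 * (m + 2) ^ 2 + 6 * (m + 2) + 3) := by ring
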